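/- With the notation of the construction, in the Cayley graph Cay(G, D_R): (i) the set A × {0} is a clique of size q^{mℓ}; and (ii) every clique S of Cay(G, D_R) satisfies |S| ≤ q^{mℓ}. Hence Cay(G, D_R) has clique number q^{mℓ}. -/

import Mathlib

/-- The Cayley graph of an additive group `G` with connection set `D` (symmetrized so that
the definition is well formed; when `D = -D` the adjacency `g ~ h` is exactly `g - h ∈ D`). -/
def cayleyGraph {G : Type*} [AddCommGroup G] (D : Set G) : SimpleGraph G where
  Adj g h := g ≠ h ∧ (g - h ∈ D ∨ h - g ∈ D)
  symm := ⟨fun _ _ hgh => ⟨hgh.1.symm, hgh.2.symm⟩⟩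
  loopless := ⟨fun _ hg => hg.1 rfl⟩

/-- The generalized Denniston set `D_R ⊆ A × B` built from a set `Rs ⊆ K`. -/
noncomputable def DenniSet {K A B : Type*} [Field K] [Field A] [Field B]
    [Algebra K A] [Algebra K B] (Rs : Set K) : Set (A × B) :=
  {x : A × B | (x.1 ≠ 0 ∧ x.2 ≠ 0 ∧
      Algebra.norm K x.2 / Algebra.norm K x.1 ∈ Rs \ {0}) ∨ (x.1 ≠ 0 ∧ x.2 = 0)}

theorem stmt4 (p s m ℓ r q : ℕ) (hp : p.Prime) (hs : 1 ≤ s) (hm : 1 ≤ m) (hl : 1 ≤ ℓ)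
    (hr : r ≤ m) (hq : q = p ^ s)
    (F K A B : Type*) [Field F] [Field K] [Field A] [Field B]
    [Fintype F] [Fintype K] [Fintype A] [Fintype B]
    [Algebra F K] [Algebra K A] [Algebra K B]
    (hF : Fintype.card F = q) (hK : Fintype.card K = q ^ m)
    (hA : Fintype.card A = q ^ (m * ℓ)) (hB : Fintype.card B = q ^ (m * (ℓ + 1)))
    (R : Submodule F K) (hRdim : Module.finrank F R = r) :
    (cayleyGraph (DenniSet (R : Set K) : Set (A × B))).IsClique
        {x : A × B | x.2 = 0} ∧
    ({x : A × B | x.2 = 0}).ncard = q ^ (m * ℓ) ∧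
    (∀ S : Set (A × B),
        (cayleyGraph (DenniSet (R : Set K) : Set (A × B))).IsClique S →
          S.ncard ≤ q ^ (m * ℓ)) ∧
    (cayleyGraph (DenniSet (R : Set K) : Set (A × B))).cliqueNum = q ^ (m * ℓ) := by
  have hclique : (cayleyGraph (DenniSet (R : Set K) : Set (A × B))).IsClique
      {x : A × B | x.2 = 0} := by
    intro x hx y hy hxy
    show _ ≠ _ ∧ (_ ∨ _)
    refine ⟨hxy, Or.inl (Or.inr ⟨?_, ?_⟩)⟩
    · intro h
      apply hxy
      have := sub_eq_zero.mp h
      exact Prod.ext this (hx.trans hy.symm)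
    · simp only [Set.mem_setOf_eq] at hx hy
      simp [Prod.snd_sub, hx, hy]
  have hcard : ({x : A × B | x.2 = 0}).ncard = q ^ (m * ℓ) := by
    have himg : {x : A × B | x.2 = 0} = (fun a : A => (a, (0 : B))) '' Set.univ := by
      ext x
      simp only [Set.mem_setOf_eq, Set.image_univ, Set.mem_range]
      exact ⟨fun h => ⟨x.1, Prod.ext rfl h.symm⟩, fun ⟨a, ha⟩ => by rw [← ha]⟩
    rw [himg, Set.ncard_image_of_injective _ (fun a b h => (Prod.mk.injEq _ _ _ _ ▸ h).1),
      Set.ncard_univ, Nat.card_eq_fintype_card, hA]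
  have hbound : ∀ S : Set (A × B),
      (cayleyGraph (DenniSet (R : Set K) : Set (A × B))).IsClique S →
        S.ncard ≤ q ^ (m * ℓ) := by
    intro S hS
    have hinj : Set.InjOn Prod.fst S := by
      intro x hx y hy hfst
      by_contra hne
      obtain ⟨-, hD⟩ := (hS hx hy hne : _ ≠ _ ∧ (_ ∨ _))
      have h1 : (x - y).1 = 0 := by simp [hfst]
      have h2 : (y - x).1 = 0 := by simp [hfst]
      rcases hD with h | h <;>
        rcases h with ⟨h', -⟩ | ⟨h', -⟩ <;> [exact h' h1; exact h' h1; exact h' h2; exact h' h2]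
    calc S.ncard = (Prod.fst '' S).ncard := (Set.ncard_image_of_injOn hinj).symm
      _ ≤ (Set.univ : Set A).ncard :=
          Set.ncard_le_ncard (Set.subset_univ _) Set.finite_univ
      _ = q ^ (m * ℓ) := by rw [Set.ncard_univ, Nat.card_eq_fintype_card, hA]
  refine ⟨hclique, hcard, hbound, ?_⟩
  apply le_antisymm
  · obtain ⟨t, ht⟩ := (cayleyGraph (DenniSet (R : Set K) : Set (A × B))).exists_isNClique_cliqueNum
    rw [← ht.card_eq]
    have := hbound ↑t ht.isClique
    rwa [Set.ncard_coe_finset] at this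
  · have hfin : ({x : A × B | x.2 = 0}).Finite := Set.toFinite _
    have : (cayleyGraph (DenniSet (R : Set K) : Set (A × B))).IsClique (hfin.toFinset : Set (A × B)) := by
      rwa [Set.Finite.coe_toFinset]
    have hle := SimpleGraph.IsClique.card_le_cliqueNum (tc := this)
    rwa [← Set.ncard_eq_toFinset_card _ hfin, hcard] at hle
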